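/- Let k be a field, R = k[s,u,t,v], and let f1, f2, f3 ∈ R generate an ideal I = ⟨f1,f2,f3⟩ of height 2. Then the Koszul module K is a proper submodule of the syzygy module S, i.e., K ⊆ S and K ≠ S. -/

import Mathlib

/-!
STATEMENT 5: k field, R = k[s,u,t,v], f1,f2,f3 generating an ideal I of
height 2.  Then the Koszul module K is a proper submodule of the syzygy
module S: K ≤ S and K ≠ S.
-/

noncomputable section

/-- Height of an ideal: infimum of the heights of the primes containing it. -/
def idealHeight {A : Type*} [CommRing A] (I : Ideal A) : ℕ∞ :=
  ⨅ (P : PrimeSpectrum A) (_ : I ≤ P.asIdeal), Order.height P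

/-- The syzygy module of f₁, f₂, f₃. -/
def Syz {k : Type} [Field k] (f₁ f₂ f₃ : MvPolynomial (Fin 4) k) :
    Submodule (MvPolynomial (Fin 4) k) (Fin 3 → MvPolynomial (Fin 4) k) :=
  LinearMap.ker
    ((LinearMap.proj 0 : (Fin 3 → MvPolynomial (Fin 4) k) →ₗ[MvPolynomial (Fin 4) k]
        MvPolynomial (Fin 4) k).smulRight f₁
      + (LinearMap.proj 1).smulRight f₂ + (LinearMap.proj 2).smulRight f₃)

/-- The Koszul module of f₁, f₂, f₃. -/
def Kos {k : Type} [Field k] (f₁ f₂ f₃ : MvPolynomial (Fin 4) k) :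
    Submodule (MvPolynomial (Fin 4) k) (Fin 3 → MvPolynomial (Fin 4) k) :=
  Submodule.span (MvPolynomial (Fin 4) k) {![f₂, -f₁, 0], ![f₃, 0, -f₁], ![0, f₃, -f₂]}

/- ### Auxiliary lemmas -/

lemma mem_syz_iff {k : Type} [Field k] (f₁ f₂ f₃ : MvPolynomial (Fin 4) k)
    (v : Fin 3 → MvPolynomial (Fin 4) k) :
    v ∈ Syz f₁ f₂ f₃ ↔ v 0 * f₁ + v 1 * f₂ + v 2 * f₃ = 0 := by
  simp [Syz, LinearMap.mem_ker, smul_eq_mul]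

lemma kos_extract {k : Type} [Field k] {f₁ f₂ f₃ A B C : MvPolynomial (Fin 4) k}
    (h : ![A, B, C] ∈ Kos f₁ f₂ f₃) :
    ∃ a b c : MvPolynomial (Fin 4) k,
      A = a * f₂ + b * f₃ ∧ B = -(a * f₁) + c * f₃ ∧ C = -(b * f₁) - c * f₂ := by
  rw [Kos, Submodule.mem_span_insert] at h
  obtain ⟨a, z, hz, hv⟩ := h
  rw [Submodule.mem_span_insert] at hz
  obtain ⟨b, w, hw, hz'⟩ := hz
  rw [Submodule.mem_span_singleton] at hw
  obtain ⟨c, rfl⟩ := hw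
  subst hz'
  refine ⟨a, b, c, ?_, ?_, ?_⟩
  · simpa [smul_eq_mul, mul_comm] using congrFun hv 0
  · simpa [smul_eq_mul, mul_comm, sub_eq_add_neg] using congrFun hv 1
  · have := congrFun hv 2
    simp [smul_eq_mul, mul_comm] at this
    rw [this]; ring

lemma three_le_height {α : Type*} [PartialOrder α] {x0 x1 x2 x3 : α}
    (h1 : x0 < x1) (h2 : x1 < x2) (h3 : x2 < x3) : 3 ≤ Order.height x3 := by
  let p : LTSeries α := (((RelSeries.singleton _ x0).snoc x1 h1).snoc x2 (by
    exact h2)).snoc x3 (by exact h3)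
  have hlast : p.last = x3 := by exact RelSeries.last_snoc _ _ _
  have := Order.length_le_height (p := p) (x := x3) (le_of_eq hlast)
  exact le_trans (le_of_eq rfl) this

lemma exists_prime_factor_mem {R : Type*} [CommRing R] [IsDomain R]
    [UniqueFactorizationMonoid R] (Q : Ideal R) (hQ : Q.IsPrime) :
    ∀ a : R, a ≠ 0 → a ∈ Q → ∃ p, Prime p ∧ p ∈ Q ∧ p ∣ a := by
  intro a
  refine UniqueFactorizationMonoid.induction_on_prime a ?_ ?_ ?_
  · intro h; exact absurd rfl h
  · intro u hu _ huQ
    exact absurd (Q.eq_top_of_isUnit_mem huQ hu) hQ.ne_top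
  · intro b p hb hp ih _ hmem
    rcases hQ.mem_or_mem hmem with h | h
    · exact ⟨p, hp, h, dvd_mul_right _ _⟩
    · obtain ⟨q, hq, hqQ, hqb⟩ := ih hb h
      exact ⟨q, hq, hqQ, hqb.mul_left _⟩

theorem koszul_proper_in_syzygy
    (k : Type) [Field k]
    (f₁ f₂ f₃ : MvPolynomial (Fin 4) k)
    (I : Ideal (MvPolynomial (Fin 4) k)) (hI : I = Ideal.span {f₁, f₂, f₃})
    (hht : idealHeight I = 2) :
    Kos f₁ f₂ f₃ ≤ Syz f₁ f₂ f₃ ∧ Kos f₁ f₂ f₃ ≠ Syz f₁ f₂ f₃ := by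
  -- K ≤ S
  have hKS : Kos f₁ f₂ f₃ ≤ Syz f₁ f₂ f₃ := by
    rw [Kos, Submodule.span_le]
    rintro v (rfl | rfl | rfl) <;>
      · rw [SetLike.mem_coe, mem_syz_iff]
        simp; ring
  refine ⟨hKS, fun hK => ?_⟩
  -- every prime over I has height ≥ 2
  have hlow : ∀ P : PrimeSpectrum (MvPolynomial (Fin 4) k), I ≤ P.asIdeal → 2 ≤ Order.height P := by
    intro P hP
    calc (2 : ℕ∞) = idealHeight I := hht.symm
    _ ≤ Order.height P := iInf₂_le P hP
  -- there is a prime P over I of height exactly 2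
  obtain ⟨P, hIP, hP2⟩ : ∃ P : PrimeSpectrum (MvPolynomial (Fin 4) k), I ≤ P.asIdeal ∧ Order.height P = 2 := by
    by_contra hc
    push_neg at hc
    have h3 : ∀ P : PrimeSpectrum (MvPolynomial (Fin 4) k), I ≤ P.asIdeal → 3 ≤ Order.height P := by
      intro P hP
      have h2 := hlow P hP
      have hne := hc P hP
      have : (2 : ℕ∞) < Order.height P := lt_of_le_of_ne h2 (Ne.symm hne)
      have h21 : (2 : ℕ∞) + 1 ≤ Order.height P := ENat.add_one_le_iff (by decide) |>.mpr this
      exact le_trans (by norm_num) h21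
    have : (3 : ℕ∞) ≤ idealHeight I := le_iInf₂ h3
    rw [hht] at this
    exact absurd this (by decide)
  have hPprime := P.isPrime
  have hItop : I ≠ ⊤ := fun h => hPprime.ne_top (top_le_iff.mp (h ▸ hIP))
  -- membership of the generators in I and P
  have hf₁I : f₁ ∈ I := hI ▸ Ideal.subset_span (by simp)
  have hf₂I : f₂ ∈ I := hI ▸ Ideal.subset_span (by simp)
  have hf₃I : f₃ ∈ I := hI ▸ Ideal.subset_span (by simp)
  -- the key consequence of K = S
  have key : ∀ A B C : MvPolynomial (Fin 4) k, A * f₁ + B * f₂ + C * f₃ = 0 →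
      ∃ a b c : MvPolynomial (Fin 4) k, A = a * f₂ + b * f₃ ∧ B = -(a * f₁) + c * f₃ ∧ C = -(b * f₁) - c * f₂ := by
    intro A B C h
    have hv : ![A, B, C] ∈ Syz f₁ f₂ f₃ := by
      rw [mem_syz_iff]; simpa using h
    exact kos_extract (hK ▸ hv)
  -- f₁ ≠ 0 and f₂ ≠ 0
  have hf₁ : f₁ ≠ 0 := by
    rintro rfl
    obtain ⟨a, b, c, h1, -, -⟩ := key 1 0 0 (by ring)
    exact hItop (Ideal.eq_top_of_isUnit_mem _ (h1 ▸ I.add_mem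
      (I.mul_mem_left a hf₂I) (I.mul_mem_left b hf₃I)) isUnit_one)
  have hf₂ : f₂ ≠ 0 := by
    rintro rfl
    obtain ⟨a, b, c, -, h2, -⟩ := key 0 1 0 (by ring)
    refine hItop (Ideal.eq_top_of_isUnit_mem _ ?_ isUnit_one)
    rw [h2]
    exact I.add_mem (I.neg_mem (I.mul_mem_left a hf₁I)) (I.mul_mem_left c hf₃I)
  -- reduced factorization of f₁, f₂
  obtain ⟨a, b, d, hab, hda, hdb⟩ :=
    UniqueFactorizationMonoid.exists_reduced_factors f₁ hf₁ f₂
  have hd0 : d ≠ 0 := fun h => hf₁ (by rw [← hda, h, zero_mul])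
  have ha0 : a ≠ 0 := fun h => hf₁ (by rw [← hda, h, mul_zero])
  have hb0 : b ≠ 0 := fun h => hf₂ (by rw [← hdb, h, mul_zero])
  -- the unit relation 1 = α d + τ f₃
  obtain ⟨α, τ, hunit⟩ : ∃ α τ : MvPolynomial (Fin 4) k, 1 = α * d + τ * f₃ := by
    obtain ⟨α, β, γ, h1, h2, h3⟩ := key b (-a) 0 (by rw [← hda, ← hdb]; ring)
    have h3' : β * f₁ + γ * f₂ = 0 := by
      have := h3.symm
      linear_combination h3
    have hcancel : β * a = b * (-γ) := by
      have : d * (β * a + γ * b) = 0 := by rw [← hda, ← hdb] at h3'; linear_combination h3'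
      have h0 := (mul_eq_zero.mp this).resolve_left hd0
      linear_combination h0
    have hbβ : b ∣ β := (hab.symm).dvd_of_dvd_mul_right ⟨-γ, hcancel⟩
    obtain ⟨τ, rfl⟩ := hbβ
    refine ⟨α, τ, ?_⟩
    have : b * 1 = b * (α * d + τ * f₃) := by
      rw [← hdb] at h1; linear_combination h1
    exact mul_left_cancel₀ hb0 this
  have hd_notP : d ∉ P.asIdeal := by
    intro hd
    have : (1 : MvPolynomial (Fin 4) k) ∈ P.asIdeal := hunit ▸ P.asIdeal.add_mem
      (P.asIdeal.mul_mem_left α hd) (P.asIdeal.mul_mem_left τ (hIP hf₃I))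
    exact hPprime.ne_top (Ideal.eq_top_of_isUnit_mem _ this isUnit_one)
  -- the colon fact : y * f₃ ∈ (f₁, f₂) → y ∈ (f₁, f₂)
  set J : Ideal (MvPolynomial (Fin 4) k) := Ideal.span {f₁, f₂} with hJ
  have hcolon : ∀ y : MvPolynomial (Fin 4) k, y * f₃ ∈ J → y ∈ J := by
    intro y hy
    rw [hJ, Ideal.mem_span_pair] at hy
    obtain ⟨u, v, huv⟩ := hy
    obtain ⟨a', b', c', -, -, h3⟩ := key (-u) (-v) y (by linear_combination -huv)
    rw [h3, hJ, Ideal.mem_span_pair]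
    exact ⟨-b', -c', by ring⟩
  -- the multiplicative set generated by powers of f₃ and the complement of P
  set T : Submonoid (MvPolynomial (Fin 4) k) := Submonoid.powers f₃ ⊔ P.asIdeal.primeCompl with hT
  have hdisj : Disjoint (J : Set (MvPolynomial (Fin 4) k)) (T : Set (MvPolynomial (Fin 4) k)) := by
    rw [Set.disjoint_left]
    intro x hxJ hxT
    rw [SetLike.mem_coe, hT, Submonoid.mem_sup] at hxT
    obtain ⟨y, ⟨n, rfl⟩, t, ht, rfl⟩ := hxT
    have : ∀ m : ℕ, f₃ ^ m * t ∈ J → t ∈ J := by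
      intro m
      induction m with
      | zero => simp
      | succ m ih =>
        intro h
        apply ih
        apply hcolon
        have : f₃ ^ m * t * f₃ = f₃ ^ (m + 1) * t := by ring
        rw [this]; exact h
    have htJ : t ∈ J := this n hxJ
    have hJP : J ≤ P.asIdeal := by
      rw [hJ, Ideal.span_le]
      rintro x (rfl | rfl)
      · exact hIP hf₁I
      · exact hIP hf₂I
    exact ht (hJP htJ)
  obtain ⟨Q, hQprime, hJQ, hQdisj⟩ := Ideal.exists_le_prime_disjoint J T hdisj
  -- Q ⊆ P, strictly
  have hQP : Q ≤ P.asIdeal := by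
    intro x hx
    by_contra hxP
    exact Set.disjoint_left.mp hQdisj hx (Submonoid.mem_sup_right hxP)
  have hf₃Q : f₃ ∉ Q := fun h =>
    Set.disjoint_left.mp hQdisj h (Submonoid.mem_sup_left ⟨1, pow_one f₃⟩)
  have hQltP : Q < P.asIdeal := lt_of_le_of_ne hQP (fun h => hf₃Q (h ▸ hIP hf₃I))
  -- a, b ∈ Q
  have hf₁Q : f₁ ∈ Q := hJQ (Ideal.subset_span (by simp))
  have hf₂Q : f₂ ∈ Q := hJQ (Ideal.subset_span (by simp))
  have hdQ : d ∉ Q := fun h => hd_notP (hQP h)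
  have haQ : a ∈ Q := by
    rcases hQprime.mem_or_mem (show d * a ∈ Q from hda ▸ hf₁Q) with h | h
    · exact absurd h hdQ
    · exact h
  have hbQ : b ∈ Q := by
    rcases hQprime.mem_or_mem (show d * b ∈ Q from hdb ▸ hf₂Q) with h | h
    · exact absurd h hdQ
    · exact h
  -- prime factor p' of a inside Q
  obtain ⟨p', hp', hp'Q, hp'a⟩ := exists_prime_factor_mem Q hQprime a ha0 haQ
  -- chain ⊥ < (p') < Q < P gives height P ≥ 3
  have hp'0 : Ideal.span {p'} ≠ (⊥ : Ideal (MvPolynomial (Fin 4) k)) := by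
    rw [Ne, Ideal.span_singleton_eq_bot]
    exact hp'.ne_zero
  have hp'prime : (Ideal.span {p'} : Ideal (MvPolynomial (Fin 4) k)).IsPrime :=
    (Ideal.span_singleton_prime hp'.ne_zero).mpr hp'
  have hbot : (⊥ : Ideal (MvPolynomial (Fin 4) k)).IsPrime := Ideal.bot_prime
  have hlt1 : (⊥ : Ideal (MvPolynomial (Fin 4) k)) < Ideal.span {p'} :=
    bot_lt_iff_ne_bot.mpr hp'0
  have hlt2 : Ideal.span {p'} < Q := by
    refine lt_of_le_of_ne ((Ideal.span_singleton_le_iff_mem _).mpr hp'Q) (fun h => ?_)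
    have : p' ∣ b := by
      rw [← Ideal.mem_span_singleton, h]; exact hbQ
    exact hp'.not_unit (hab hp'a this)
  have h1 : (⟨⊥, hbot⟩ : PrimeSpectrum (MvPolynomial (Fin 4) k)) < ⟨Ideal.span {p'}, hp'prime⟩ :=
    (PrimeSpectrum.asIdeal_lt_asIdeal _ _).mp hlt1
  have h2 : (⟨Ideal.span {p'}, hp'prime⟩ : PrimeSpectrum (MvPolynomial (Fin 4) k)) < ⟨Q, hQprime⟩ :=
    (PrimeSpectrum.asIdeal_lt_asIdeal _ _).mp hlt2
  have h3 : (⟨Q, hQprime⟩ : PrimeSpectrum (MvPolynomial (Fin 4) k)) < P :=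
    (PrimeSpectrum.asIdeal_lt_asIdeal _ _).mp hQltP
  have := three_le_height h1 h2 h3
  rw [hP2] at this
  exact absurd this (by decide)

end
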